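/- Let α, β > −1 with a² + 2b² + 3a < 0. Then there exists M ∈ ℕ such that for all m ≥ M the linearization coefficient g_T(2m+1, 2m+1; 4) of the generalized Chebyshev polynomials is strictly negative. -/

import Mathlib

open Polynomial Finset

noncomputable def poch (c : ℝ) (k : ℕ) : ℝ := (ascPochhammer ℝ k).eval c

/-- Jacobi polynomial `R_n^{(α,β)}`, normalized by `R_n^{(α,β)}(1) = 1`. -/
noncomputable def jacobiR (α β : ℝ) (n : ℕ) : Polynomial ℝ :=
  ∑ k ∈ Finset.range (n + 1),
    Polynomial.C (poch (-(n : ℝ)) k * poch ((n : ℝ) + α + β + 1) k /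
      (poch (α + 1) k * 2 ^ k * (Nat.factorial k : ℝ))) * (1 - Polynomial.X) ^ k

/-- Generalized Chebyshev polynomial `T_n^{(α,β)}`. -/
noncomputable def genCheb (α β : ℝ) (n : ℕ) : Polynomial ℝ :=
  if n % 2 = 0 then (jacobiR α β (n / 2)).comp (2 * Polynomial.X ^ 2 - 1)
  else Polynomial.X * (jacobiR α (β + 1) (n / 2)).comp (2 * Polynomial.X ^ 2 - 1)

/-- Gasper's set `V` (with `a = α+β+1`, `b = α−β`). -/
def Vset : Set (ℝ × ℝ) := { p | -1 < p.1 ∧ -1 < p.2 ∧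
  ((p.1 + p.2 + 1) ^ 2 - 7 * (p.1 + p.2 + 1) - 24) * (p.1 - p.2) ^ 2 ≤
    (p.1 + p.2 + 1) * ((p.1 + p.2 + 1) + 5) * ((p.1 + p.2 + 1) + 3) ^ 2 ∧
  0 ≤ p.1 - p.2 }

/-- The set `V′`. -/
def V'set : Set (ℝ × ℝ) := { p | -1 < p.1 ∧ -1 < p.2 ∧
  0 ≤ (p.1 + p.2 + 1) ^ 2 + 2 * (p.1 - p.2) ^ 2 + 3 * (p.1 + p.2 + 1) ∧
  0 ≤ p.1 - p.2 }

/-- The set `Δ`. -/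
def Dset : Set (ℝ × ℝ) := { p | -1 < p.1 ∧ -1 < p.2 ∧
  0 ≤ p.1 + p.2 + 1 ∧ 0 ≤ p.1 - p.2 }

/-- The coefficient function `ι(m, m+s; ·)` (with parameters `a`, `b`). -/
noncomputable def iotaF (a b : ℝ) (m s : ℕ) (j : ℝ) : ℝ :=
  b * ((2 * (m : ℝ) - j) * (2 * (m : ℝ) + 2 * (s : ℝ) + j + 2 * a) *
        ((2 * (s : ℝ) + j + 1) * (j + 1)) / (2 * (s : ℝ) + 2 * j + a + 1)
      - (2 * (m : ℝ) - j + 1) * (2 * (m : ℝ) + 2 * (s : ℝ) + j + 2 * a - 1) *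
        ((2 * (s : ℝ) + j) * j) / (2 * (s : ℝ) + 2 * j + a - 1))

/-- The coefficient function `θ(m, m+s; ·)` (with parameters `a`, `b`). -/
noncomputable def thetaF (a b : ℝ) (m s : ℕ) (j : ℝ) : ℝ :=
  (2 * (m : ℝ) - j + a - 1) * (2 * (m : ℝ) + 2 * (s : ℝ) + j + a + 1) *
    ((2 * (s : ℝ) + j + 1) * (2 * (s : ℝ) + 2 * j + a - b + 1)) /
    ((2 * (s : ℝ) + 2 * j + a + 1) * (2 * (s : ℝ) + 2 * j + a + 2)) * (j + 1)

/-- The coefficient function `κ(m, m+s; ·)` (with parameters `a`, `b`). -/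
noncomputable def kappaF (a b : ℝ) (m s : ℕ) (j : ℝ) : ℝ :=
  (2 * (m : ℝ) - j + 1) * (2 * (m : ℝ) + 2 * (s : ℝ) + j + 2 * a - 1) *
    ((2 * (s : ℝ) + j + a - 1) * (2 * (s : ℝ) + 2 * j + a + b - 1)) /
    ((2 * (s : ℝ) + 2 * j + a - 2) * (2 * (s : ℝ) + 2 * j + a - 1)) * (j + a - 1)

/-- Recurrence coefficient `a^T_{2k+1} = (2k+a+b+1)/(4k+2a+2)`. -/
noncomputable def aTc (a b : ℝ) (k : ℕ) : ℝ :=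
  (2 * (k : ℝ) + a + b + 1) / (4 * (k : ℝ) + 2 * a + 2)

/-- Recurrence coefficient `c^T_{2k+1} = (2k+a−b+1)/(4k+2a+2)`. -/
noncomputable def cTc (a b : ℝ) (k : ℕ) : ℝ :=
  (2 * (k : ℝ) + a - b + 1) / (4 * (k : ℝ) + 2 * a + 2)

/-- The auxiliary function `p`. -/
noncomputable def pF (a b : ℝ) (m s j : ℕ) : ℝ :=
  cTc a b (s + j + 1) / aTc a b (s + j) *
    (iotaF (a + 1) (b - 1) m s (j : ℝ) / thetaF (a + 1) (b - 1) m s (j : ℝ))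

/-- The auxiliary function `q`. -/
noncomputable def qF (a b : ℝ) (m s j : ℕ) : ℝ :=
  (cTc a b (s + j) * cTc a b (s + j + 1)) / (aTc a b (s + j - 1) * aTc a b (s + j)) *
    (kappaF (a + 1) (b - 1) m s (j : ℝ) / thetaF (a + 1) (b - 1) m s (j : ℝ))

lemma poch_zero (c : ℝ) : poch c 0 = 1 := by simp [poch]
lemma poch_succ (c : ℝ) (k : ℕ) : poch c (k+1) = poch c k * (c + k) := by
  simp [poch, ascPochhammer_succ_right]
lemma poch_succ_left (c : ℝ) (k : ℕ) : poch c (k+1) = c * poch (c+1) k := by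
  simp [poch, ascPochhammer_succ_left, eval_comp]
lemma poch_pos {c : ℝ} (hc : 0 < c) (k : ℕ) : 0 < poch c k := by
  induction k with
  | zero => simp [poch_zero]
  | succ n ih => rw [poch_succ]; positivity
lemma poch_neg_nat {n k : ℕ} (h : n < k) : poch (-(n:ℝ)) k = 0 :=
  ascPochhammer_eval_neg_coe_nat_of_lt h

/-- coefficient of jacobiR -/
noncomputable def jc (α β : ℝ) (n k : ℕ) : ℝ :=
  poch (-(n : ℝ)) k * poch ((n : ℝ) + α + β + 1) k /
      (poch (α + 1) k * 2 ^ k * (Nat.factorial k : ℝ))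

lemma jc_zero {α β : ℝ} {n k : ℕ} (h : n < k) : jc α β n k = 0 := by
  simp [jc, poch_neg_nat h]

lemma jacobiR_eq (α β : ℝ) (n m : ℕ) (h : n + 1 ≤ m) :
    jacobiR α β n = ∑ k ∈ Finset.range m, Polynomial.C (jc α β n k) * (1 - Polynomial.X) ^ k := by
  have h0 : jacobiR α β n = ∑ k ∈ Finset.range (n+1), Polynomial.C (jc α β n k) * (1 - Polynomial.X) ^ k := rfl
  rw [h0]
  apply Finset.sum_subset (by simpa using Finset.range_subset_range.2 h)
  intro k _ hk
  rw [jc_zero (by simpa using hk)]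
  simp

lemma den_ne {α : ℝ} (hα : -1 < α) (j : ℕ) :
    poch (α + 1) j * 2 ^ j * (Nat.factorial j : ℝ) ≠ 0 := by
  have h1 : (0:ℝ) < poch (α+1) j := poch_pos (by linarith) j
  have h2 : (0:ℝ) < (Nat.factorial j : ℝ) := by exact_mod_cast Nat.factorial_pos j
  positivity

lemma rel1_scalar {α β : ℝ} (hα : -1 < α) (hβ : -1 < β) (n j : ℕ) (hn : 1 ≤ n) :
    jc α β n j = ((n:ℝ) + (α+β+1))/(2*n + (α+β+1)) * jc α (β+1) n j
      + ((n:ℝ)/(2*n + (α+β+1))) * jc α (β+1) (n-1) j := by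
  have hcast : ((n-1 : ℕ) : ℝ) = (n:ℝ) - 1 := by
    rw [Nat.cast_sub hn]; norm_num
  have hna : (0:ℝ) < (n:ℝ) + (α+β+1) := by
    have : (1:ℝ) ≤ (n:ℝ) := by exact_mod_cast hn
    linarith
  have h2na : (0:ℝ) < 2*(n:ℝ) + (α+β+1) := by
    have : (1:ℝ) ≤ (n:ℝ) := by exact_mod_cast hn
    linarith
  have hnne : ((n:ℝ)) ≠ 0 := by positivity
  set u := poch (-(n:ℝ)) j with hu
  set v := poch ((n:ℝ) + α + β + 1) j with hv
  set w := poch ((n:ℝ) + α + (β+1) + 1) j with hw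
  set z := poch (-(n:ℝ)+1) j with hz
  have h1 : ((n:ℝ) + α + β + 1) * w = v * ((n:ℝ) + α + β + 1 + j) := by
    have e1 := poch_succ_left ((n:ℝ) + α + β + 1) j
    have e2 := poch_succ ((n:ℝ) + α + β + 1) j
    rw [hv, hw]
    have : (n:ℝ) + α + (β+1) + 1 = ((n:ℝ) + α + β + 1) + 1 := by ring
    rw [this]
    linarith [e1, e2]
  have h2 : (-(n:ℝ)) * z = u * (-(n:ℝ) + j) := by
    have e1 := poch_succ_left (-(n:ℝ)) j
    have e2 := poch_succ (-(n:ℝ)) j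
    rw [hu, hz]; linarith [e1, e2]
  have G : u * v * (2*(n:ℝ) + (α+β+1)) = ((n:ℝ) + (α+β+1)) * (u * w) + (n:ℝ) * (z * v) := by
    linear_combination (-u) * h1 + v * h2
  have hd := den_ne hα j
  rw [jc, jc, jc, hcast]
  rw [show (n:ℝ) - 1 + α + (β+1) + 1 = (n:ℝ) + α + β + 1 by ring,
      show -((n:ℝ) - 1) = -(n:ℝ)+1 by ring]
  rw [← hu, ← hv, ← hw, ← hz]
  rw [div_mul_div_comm, div_mul_div_comm, ← add_div,
      div_eq_div_iff hd (by exact mul_ne_zero h2na.ne' hd)]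
  linear_combination (poch (α + 1) j * 2 ^ j * (Nat.factorial j : ℝ)) * G

lemma jc_zero' (α β : ℝ) (n : ℕ) : jc α β n 0 = 1 := by
  simp [jc, poch_zero]

lemma rel2_scalar {α β : ℝ} (hα : -1 < α) (hβ : -1 < β) (n j : ℕ) :
    jc α (β+1) n j - (if j = 0 then 0 else jc α (β+1) n (j-1) / 2)
      = ((n:ℝ)+α+1)/(2*n+α+β+2) * jc α β (n+1) j
        + ((n:ℝ)+β+1)/(2*n+α+β+2) * jc α β n j := by
  have habn : (0:ℝ) < 2*(n:ℝ)+α+β+2 := by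
    have : (0:ℝ) ≤ (n:ℝ) := Nat.cast_nonneg n
    linarith
  cases j with
  | zero =>
    rw [if_pos rfl]
    simp only [jc_zero', sub_zero]
    have hb2 : (2*(n:ℝ)+α+β+2) ≠ 0 := habn.ne'
    rw [mul_one, mul_one, ← add_div, eq_div_iff hb2]
    ring
  | succ i =>
    simp only [Nat.succ_ne_zero, if_neg, Nat.add_sub_cancel]
    set u := poch (-(n:ℝ)) i with hu
    set v := poch ((n:ℝ)+α+β+2) i with hv
    set D := poch (α+1) i * 2^i * (Nat.factorial i : ℝ) with hD
    have hDne : D ≠ 0 := den_ne hα i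
    have p1 : poch (-(n:ℝ)) (i+1) = u * (-(n:ℝ) + i) := poch_succ _ _
    have p2 : poch ((n:ℝ)+α+(β+1)+1) (i+1) = v * ((n:ℝ)+α+β+2+i) := by
      rw [show (n:ℝ)+α+(β+1)+1 = (n:ℝ)+α+β+2 by ring]
      exact poch_succ _ _
    have p3 : poch (-((n:ℝ)+1)) (i+1) = (-((n:ℝ)+1)) * u := by
      have := poch_succ_left (-((n:ℝ)+1)) i
      rw [show -((n:ℝ)+1)+1 = -(n:ℝ) by ring] at this
      rw [this, hu]
    have p4 : poch ((n:ℝ)+α+β+1) (i+1) = ((n:ℝ)+α+β+1) * v := by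
      have := poch_succ_left ((n:ℝ)+α+β+1) i
      rw [show (n:ℝ)+α+β+1+1 = (n:ℝ)+α+β+2 by ring] at this
      rw [this, hv]
    have pD : poch (α+1) (i+1) * 2^(i+1) * (Nat.factorial (i+1) : ℝ)
        = D * (2*((i:ℝ)+1)*(α+1+i)) := by
      rw [poch_succ, hD, Nat.factorial_succ]
      push_cast
      ring
    have p2' : poch ((n:ℝ)+α+β+2) (i+1) = v * ((n:ℝ)+α+β+2+i) := poch_succ _ _
    rw [jc, jc, jc, jc]
    push_cast
    rw [show (n:ℝ)+α+(β+1)+1 = (n:ℝ)+α+β+2 by ring]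
    rw [show (n:ℝ)+1+α+β+1 = (n:ℝ)+α+β+2 by ring]
    rw [p1, p2', p3, p4, pD]
    rw [← hu, ← hv, ← hD]
    have h1 : (0:ℝ) < α+1+i := by
      have : (0:ℝ) ≤ (i:ℝ) := Nat.cast_nonneg i
      linarith
    have h2 : ((i:ℝ)+1) ≠ 0 := by positivity
    have hb2 : (2*(n:ℝ)+α+β+2) ≠ 0 := habn.ne'
    generalize hE : (2*(n:ℝ)+α+β+2) = E at hb2 ⊢
    field_simp [hDne, hb2, h1.ne', h2]
    subst hE
    ring

lemma rel1_poly {α β : ℝ} (hα : -1 < α) (hβ : -1 < β) (n : ℕ) (hn : 1 ≤ n) :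
    jacobiR α β n
      = Polynomial.C (((n:ℝ)+(α+β+1))/(2*n+(α+β+1))) * jacobiR α (β+1) n
        + Polynomial.C (((n:ℝ))/(2*n+(α+β+1))) * jacobiR α (β+1) (n-1) := by
  rw [jacobiR_eq α β n (n+1) le_rfl, jacobiR_eq α (β+1) n (n+1) le_rfl,
      jacobiR_eq α (β+1) (n-1) (n+1) (by omega), Finset.mul_sum, Finset.mul_sum,
      ← Finset.sum_add_distrib]
  refine Finset.sum_congr rfl fun j _ => ?_
  rw [rel1_scalar hα hβ n j hn, C_add, C_mul, C_mul]
  ring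

lemma rel2_poly {α β : ℝ} (hα : -1 < α) (hβ : -1 < β) (n : ℕ) :
    Polynomial.C (1/2 : ℝ) * (1 + Polynomial.X) * jacobiR α (β+1) n
      = Polynomial.C (((n:ℝ)+α+1)/(2*n+α+β+2)) * jacobiR α β (n+1)
        + Polynomial.C (((n:ℝ)+β+1)/(2*n+α+β+2)) * jacobiR α β n := by
  have h2 : Polynomial.C (1/2:ℝ) + Polynomial.C (1/2:ℝ) = 1 := by
    rw [← C_add]; norm_num
  have hsplit : Polynomial.C (1/2:ℝ) * (1 + Polynomial.X)
      = 1 - Polynomial.C (1/2:ℝ) * (1 - Polynomial.X) := by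
    linear_combination h2
  set B' : ℕ → ℝ := fun j => if j = 0 then 0 else jc α (β+1) n (j-1) / 2 with hB'
  have e2 : Polynomial.C (1/2:ℝ) * (1 - Polynomial.X)
        * (∑ j ∈ Finset.range (n+2), Polynomial.C (jc α (β+1) n j) * (1-Polynomial.X)^j)
      = ∑ j ∈ Finset.range (n+2), Polynomial.C (jc α (β+1) n j / 2) * (1-Polynomial.X)^(j+1) := by
    rw [Finset.mul_sum]
    refine Finset.sum_congr rfl fun j _ => ?_
    have : Polynomial.C (jc α (β+1) n j / 2) = Polynomial.C (jc α (β+1) n j) * Polynomial.C (1/2:ℝ) := by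
      rw [← C_mul]; ring_nf
    rw [this, pow_succ]
    ring
  have e3 : ∑ j ∈ Finset.range (n+3), Polynomial.C (B' j) * (1-Polynomial.X)^j
      = ∑ j ∈ Finset.range (n+2), Polynomial.C (jc α (β+1) n j / 2) * (1-Polynomial.X)^(j+1) := by
    rw [Finset.sum_range_succ' (fun j => Polynomial.C (B' j) * (1-Polynomial.X)^j) (n+2)]
    simp [hB']
  rw [hsplit, sub_mul, one_mul, jacobiR_eq α (β+1) n (n+2) (by omega), e2, ← e3,
      jacobiR_eq α β (n+1) (n+3) (by omega), jacobiR_eq α β n (n+3) (by omega)]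
  have e5 : ∑ k ∈ Finset.range (n+2), Polynomial.C (jc α (β+1) n k) * (1-Polynomial.X)^k
      = ∑ k ∈ Finset.range (n+3), Polynomial.C (jc α (β+1) n k) * (1-Polynomial.X)^k := by
    rw [← jacobiR_eq α (β+1) n (n+2) (by omega), jacobiR_eq α (β+1) n (n+3) (by omega)]
  rw [e5]
  rw [← Finset.sum_sub_distrib, Finset.mul_sum, Finset.mul_sum, ← Finset.sum_add_distrib]
  refine Finset.sum_congr rfl fun j _ => ?_
  have hs := rel2_scalar hα hβ n j
  rw [hB']
  have : Polynomial.C (jc α (β+1) n j) * (1-Polynomial.X)^j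
      - Polynomial.C (if j = 0 then 0 else jc α (β+1) n (j-1) / 2) * (1-Polynomial.X)^j
      = Polynomial.C (jc α (β+1) n j - (if j = 0 then 0 else jc α (β+1) n (j-1) / 2)) * (1-Polynomial.X)^j := by
    rw [C_sub]; ring
  rw [this, hs, C_add, C_mul, C_mul]
  ring

noncomputable def aT (α β : ℝ) (n : ℕ) : ℝ :=
  (if n % 2 = 0 then ((n/2 : ℕ):ℝ)+(α+β+1) else ((n/2:ℕ):ℝ)+α+1) / ((n:ℝ)+(α+β+1))

noncomputable def cT (α β : ℝ) (n : ℕ) : ℝ :=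
  (if n % 2 = 0 then ((n/2 : ℕ):ℝ) else ((n/2:ℕ):ℝ)+β+1) / ((n:ℝ)+(α+β+1))

lemma genCheb_even (α β : ℝ) (k : ℕ) :
    genCheb α β (2*k) = (jacobiR α β k).comp (2 * Polynomial.X ^ 2 - 1) := by
  unfold genCheb
  rw [if_pos (by omega), show 2*k/2 = k by omega]

lemma genCheb_odd (α β : ℝ) (k : ℕ) :
    genCheb α β (2*k+1) = Polynomial.X * (jacobiR α (β+1) k).comp (2 * Polynomial.X ^ 2 - 1) := by
  unfold genCheb
  rw [if_neg (by omega), show (2*k+1)/2 = k by omega]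

lemma aT_even (α β : ℝ) (k : ℕ) : aT α β (2*k) = ((k:ℝ)+(α+β+1))/(2*(k:ℝ)+(α+β+1)) := by
  unfold aT; rw [if_pos (by omega), show 2*k/2 = k by omega]; push_cast; ring_nf

lemma aT_odd (α β : ℝ) (k : ℕ) : aT α β (2*k+1) = ((k:ℝ)+α+1)/(2*(k:ℝ)+1+(α+β+1)) := by
  unfold aT; rw [if_neg (by omega), show (2*k+1)/2 = k by omega]; push_cast; ring_nf

lemma cT_even (α β : ℝ) (k : ℕ) : cT α β (2*k) = ((k:ℝ))/(2*(k:ℝ)+(α+β+1)) := by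
  unfold cT; rw [if_pos (by omega), show 2*k/2 = k by omega]; push_cast; ring_nf

lemma cT_odd (α β : ℝ) (k : ℕ) : cT α β (2*k+1) = ((k:ℝ)+β+1)/(2*(k:ℝ)+1+(α+β+1)) := by
  unfold cT; rw [if_neg (by omega), show (2*k+1)/2 = k by omega]; push_cast; ring_nf

lemma cheb_rec {α β : ℝ} (hα : -1 < α) (hβ : -1 < β) (n : ℕ) (hn : 1 ≤ n) :
    Polynomial.X * genCheb α β n
      = Polynomial.C (aT α β n) * genCheb α β (n+1)
        + Polynomial.C (cT α β n) * genCheb α β (n-1) := by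
  rcases Nat.even_or_odd n with ⟨k, hk⟩ | ⟨k, hk⟩
  · -- n = 2k, k ≥ 1
    have hk1 : 1 ≤ k := by omega
    subst hk
    rw [show k + k = 2*k by ring] at *
    rw [genCheb_even, show 2*k+1 = 2*k+1 from rfl, genCheb_odd, show 2*k-1 = 2*(k-1)+1 by omega,
        genCheb_odd, aT_even, cT_even]
    rw [rel1_poly hα hβ k hk1]
    rw [add_comp, mul_comp, mul_comp, C_comp, C_comp]
    push_cast [Nat.cast_sub hk1]
    ring
  · -- n = 2k+1
    subst hk
    rw [genCheb_odd, show 2*k+1+1 = 2*(k+1) by ring, genCheb_even,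
        show 2*k+1-1 = 2*k by omega, genCheb_even, aT_odd, cT_odd]
    have h2 : Polynomial.C (1/2:ℝ) + Polynomial.C (1/2:ℝ) = 1 := by
      rw [← C_add]; norm_num
    have hXX : (Polynomial.C (1/2:ℝ) * (1 + Polynomial.X)).comp (2 * Polynomial.X ^ 2 - 1)
        = Polynomial.X ^ 2 := by
      rw [mul_comp, add_comp, one_comp, X_comp, C_comp]
      linear_combination (Polynomial.X^2 : Polynomial ℝ) * h2
    have key := congrArg (fun p => p.comp (2 * Polynomial.X ^ 2 - 1)) (rel2_poly hα hβ k)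
    simp only [mul_comp, add_comp, C_comp, one_comp, X_comp] at key
    have key2 : (Polynomial.X^2 : Polynomial ℝ) * (jacobiR α (β+1) k).comp (2 * Polynomial.X ^ 2 - 1)
        = Polynomial.C (((k:ℝ)+α+1)/(2*k+α+β+2)) * (jacobiR α β (k+1)).comp (2 * Polynomial.X ^ 2 - 1)
          + Polynomial.C (((k:ℝ)+β+1)/(2*k+α+β+2)) * (jacobiR α β k).comp (2 * Polynomial.X ^ 2 - 1) := by
      have hx2 : Polynomial.C (1/2:ℝ) * (1 + (2 * Polynomial.X ^ 2 - 1)) = Polynomial.X^2 := by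
        linear_combination (Polynomial.X^2 : Polynomial ℝ) * h2
      rw [hx2] at key
      exact key
    push_cast
    rw [show 2*(k:ℝ)+1+(α+β+1) = 2*(k:ℝ)+α+β+2 by ring]
    calc Polynomial.X * (Polynomial.X * (jacobiR α (β+1) k).comp (2 * Polynomial.X ^ 2 - 1))
        = Polynomial.X^2 * (jacobiR α (β+1) k).comp (2 * Polynomial.X ^ 2 - 1) := by ring
      _ = _ := by rw [key2]

lemma jacobiR_zero (α β : ℝ) : jacobiR α β 0 = 1 := by
  simp [jacobiR, poch]

lemma genCheb_zero (α β : ℝ) : genCheb α β 0 = 1 := by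
  have := genCheb_even α β 0
  simpa [jacobiR_zero] using this

lemma genCheb_one (α β : ℝ) : genCheb α β 1 = Polynomial.X := by
  have := genCheb_odd α β 0
  simpa [jacobiR_zero] using this

lemma cheb_rec0 (α β : ℝ) : Polynomial.X * genCheb α β 0 = genCheb α β 1 := by
  rw [genCheb_zero, genCheb_one, mul_one]

lemma poch_ne_zero {c : ℝ} (k : ℕ) (h : ∀ i : ℕ, i < k → c + i ≠ 0) : poch c k ≠ 0 := by
  induction k with
  | zero => simp [poch_zero]
  | succ m ih =>
    rw [poch_succ]
    exact mul_ne_zero (ih fun i hi => h i (by omega)) (h m (by omega))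

lemma jc_diag_ne {α β : ℝ} (hα : -1 < α) (hβ : -1 < β) (n : ℕ) : jc α β n n ≠ 0 := by
  have h1 : poch (-(n:ℝ)) n ≠ 0 := by
    apply poch_ne_zero
    intro i hi
    have : (i:ℝ) < (n:ℝ) := by exact_mod_cast hi
    intro hc; linarith
  have h2 : poch ((n:ℝ)+α+β+1) n ≠ 0 := by
    apply poch_ne_zero
    intro i hi
    have h3 : (0:ℝ) ≤ (i:ℝ) := Nat.cast_nonneg i
    have h4 : (i:ℝ) ≤ (n:ℝ) - 1 := by
      have : (i:ℝ) + 1 ≤ (n:ℝ) := by exact_mod_cast hi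
      linarith
    intro hc; nlinarith
  have hd := den_ne hα n
  rw [jc]
  exact div_ne_zero (mul_ne_zero h1 h2) hd

lemma oneSubX_deg : (1 - Polynomial.X : Polynomial ℝ).natDegree = 1 := by
  have h1 : (1 - Polynomial.X : Polynomial ℝ) = -(Polynomial.X - Polynomial.C 1) := by rw [C_1]; ring
  rw [h1, natDegree_neg, natDegree_X_sub_C]

lemma oneSubX_pow_deg (n : ℕ) :
    ((1 - Polynomial.X : Polynomial ℝ) ^ n).natDegree = n ∧
      ((1 - Polynomial.X : Polynomial ℝ) ^ n).coeff n = (-1)^n := by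
  have h1 : (1 - Polynomial.X : Polynomial ℝ) = -(Polynomial.X - Polynomial.C 1) := by rw [C_1]; ring
  constructor
  · rw [natDegree_pow, oneSubX_deg, mul_one]
  · have hl : (1 - Polynomial.X : Polynomial ℝ).leadingCoeff = -1 := by
      rw [h1, leadingCoeff_neg, (monic_X_sub_C (1:ℝ)).leadingCoeff]
    have h2 := leadingCoeff_pow (1 - Polynomial.X : Polynomial ℝ) n
    rw [hl] at h2
    rw [← h2, leadingCoeff, natDegree_pow, oneSubX_deg, mul_one]

lemma jacobiR_natDegree_le (α β : ℝ) (n : ℕ) : (jacobiR α β n).natDegree ≤ n := by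
  rw [jacobiR]
  apply Polynomial.natDegree_sum_le_of_forall_le
  intro j hj
  simp only [Finset.mem_range] at hj
  refine le_trans (natDegree_C_mul_le _ _) ?_
  rw [(oneSubX_pow_deg j).1]
  omega

lemma jacobiR_coeff_top {α β : ℝ} (hα : -1 < α) (hβ : -1 < β) (n : ℕ) :
    (jacobiR α β n).coeff n = jc α β n n * (-1)^n := by
  have h0 : jacobiR α β n = ∑ k ∈ Finset.range (n+1), Polynomial.C (jc α β n k) * (1 - Polynomial.X) ^ k :=
    jacobiR_eq α β n (n+1) le_rfl
  rw [h0, finset_sum_coeff, Finset.sum_eq_single n]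
  · rw [coeff_C_mul, (oneSubX_pow_deg n).2]
  · intro j hj hjn
    simp only [Finset.mem_range] at hj
    have hjlt : j < n := by omega
    rw [coeff_C_mul, coeff_eq_zero_of_natDegree_lt, mul_zero]
    rw [(oneSubX_pow_deg j).1]
    exact hjlt
  · intro hn; exact absurd (Finset.self_mem_range_succ n) hn

lemma jacobiR_natDegree {α β : ℝ} (hα : -1 < α) (hβ : -1 < β) (n : ℕ) :
    (jacobiR α β n).natDegree = n := by
  refine le_antisymm (jacobiR_natDegree_le α β n) (le_natDegree_of_ne_zero ?_)
  rw [jacobiR_coeff_top hα hβ]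
  exact mul_ne_zero (jc_diag_ne hα hβ n) (by positivity)

lemma jacobiR_ne_zero {α β : ℝ} (hα : -1 < α) (hβ : -1 < β) (n : ℕ) :
    jacobiR α β n ≠ 0 := by
  intro h
  have := jacobiR_coeff_top hα hβ n
  rw [h, coeff_zero] at this
  exact mul_ne_zero (jc_diag_ne hα hβ n) (by positivity) this.symm

lemma q_natDegree : (2 * Polynomial.X ^ 2 - 1 : Polynomial ℝ).natDegree = 2 := by
  compute_degree!

lemma q_coeff2 : (2 * Polynomial.X ^ 2 - 1 : Polynomial ℝ).coeff 2 = 2 := by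
  have h : (2 * Polynomial.X ^ 2 - 1 : Polynomial ℝ)
      = Polynomial.C 2 * Polynomial.X^2 - Polynomial.C 1 := by
    have : (Polynomial.C (2:ℝ)) = (2 : Polynomial ℝ) := by
      rw [show (2:ℝ) = ((2:ℕ):ℝ) by norm_num, Polynomial.C_eq_natCast]
      norm_num
    rw [this, C_1]
  rw [h, coeff_sub, coeff_C_mul, coeff_X_pow]
  simp [coeff_C, coeff_one]

lemma comp_ne_zero {α β : ℝ} (hα : -1 < α) (hβ : -1 < β) (n : ℕ) :
    (jacobiR α β n).comp (2 * Polynomial.X ^ 2 - 1) ≠ 0 := by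
  intro h
  apply jacobiR_ne_zero hα hβ n
  have h3 := leadingCoeff_comp (p := jacobiR α β n)
      (q := (2 * Polynomial.X ^ 2 - 1 : Polynomial ℝ)) (by rw [q_natDegree]; omega)
  rw [h, leadingCoeff_zero] at h3
  have hq : (2 * Polynomial.X ^ 2 - 1 : Polynomial ℝ).leadingCoeff = 2 := by
    rw [leadingCoeff, q_natDegree, q_coeff2]
  rw [hq] at h3
  have h5 : (jacobiR α β n).leadingCoeff = 0 := by
    rcases mul_eq_zero.1 h3.symm with h6 | h6
    · exact h6
    · exfalso; revert h6; positivity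
  exact leadingCoeff_eq_zero.1 h5

lemma genCheb_natDegree {α β : ℝ} (hα : -1 < α) (hβ : -1 < β) (n : ℕ) :
    (genCheb α β n).natDegree = n := by
  rcases Nat.even_or_odd n with ⟨k, hk⟩ | ⟨k, hk⟩
  · subst hk
    rw [show k + k = 2*k by ring, genCheb_even, natDegree_comp, q_natDegree,
        jacobiR_natDegree hα hβ]
    ring
  · subst hk
    rw [genCheb_odd, natDegree_mul X_ne_zero (comp_ne_zero hα (by linarith) k),
        natDegree_X, natDegree_comp, q_natDegree, jacobiR_natDegree hα (by linarith)]
    ring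

lemma genCheb_ne_zero {α β : ℝ} (hα : -1 < α) (hβ : -1 < β) (n : ℕ) :
    genCheb α β n ≠ 0 := by
  rcases Nat.even_or_odd n with ⟨k, hk⟩ | ⟨k, hk⟩
  · subst hk
    rw [show k + k = 2*k by ring, genCheb_even]
    exact comp_ne_zero hα hβ k
  · subst hk
    rw [genCheb_odd]
    exact mul_ne_zero X_ne_zero (comp_ne_zero hα (by linarith) k)

lemma ext_zero {α β : ℝ} (hα : -1 < α) (hβ : -1 < β) :
    ∀ (D : ℕ) (c : ℕ → ℝ), (∑ j ∈ Finset.range D, Polynomial.C (c j) * genCheb α β j) = 0 →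
      ∀ j < D, c j = 0 := by
  intro D
  induction D with
  | zero => intro c _ j hj; omega
  | succ D ih =>
    intro c h j hj
    have hcD : c D = 0 := by
      have h1 := congrArg (fun p => Polynomial.coeff p D) h
      simp only [finset_sum_coeff, coeff_zero] at h1
      rw [Finset.sum_range_succ, Finset.sum_eq_zero] at h1
      · rw [coeff_C_mul] at h1
        have h2 : (genCheb α β D).coeff D ≠ 0 := by
          have hne := leadingCoeff_ne_zero.2 (genCheb_ne_zero hα hβ D)
          rwa [leadingCoeff, genCheb_natDegree hα hβ D] at hne
        simpa using mul_eq_zero.1 (by linarith [h1] : c D * (genCheb α β D).coeff D = 0) |>.resolve_right h2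
      · intro i hi
        simp only [Finset.mem_range] at hi
        rw [coeff_C_mul, coeff_eq_zero_of_natDegree_lt (by rw [genCheb_natDegree hα hβ]; omega), mul_zero]
    rcases Nat.lt_succ_iff_lt_or_eq.1 hj with hj' | rfl
    · apply ih c _ j hj'
      rw [Finset.sum_range_succ, hcD] at h
      simpa using h
    · exact hcD

lemma ext_eq {α β : ℝ} (hα : -1 < α) (hβ : -1 < β) (D : ℕ) (c d : ℕ → ℝ)
    (h : (∑ j ∈ Finset.range D, Polynomial.C (c j) * genCheb α β j)
       = ∑ j ∈ Finset.range D, Polynomial.C (d j) * genCheb α β j) :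
    ∀ j < D, c j = d j := by
  intro j hj
  have h0 : ∑ j ∈ Finset.range D, Polynomial.C (c j - d j) * genCheb α β j = 0 := by
    rw [← sub_eq_zero] at h
    rw [← h, ← Finset.sum_sub_distrib]
    refine Finset.sum_congr rfl fun i _ => ?_
    rw [C_sub]; ring
  have h1 : c j - d j = 0 := ext_zero hα hβ D (fun j => c j - d j) h0 j hj
  linarith

noncomputable def c1v (α β : ℝ) : ℝ := jc α β 2 1
noncomputable def c2v (α β : ℝ) : ℝ := jc α β 2 2

lemma T4_eq (α β : ℝ) :
    genCheb α β 4 = Polynomial.C (4 * c2v α β) * Polynomial.X^4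
      + Polynomial.C (-2 * c1v α β - 8 * c2v α β) * Polynomial.X^2
      + Polynomial.C (1 + 2 * c1v α β + 4 * c2v α β) := by
  rw [show (4:ℕ) = 2*2 from rfl, genCheb_even, jacobiR_eq α β 2 3 (by omega)]
  rw [Finset.sum_range_succ, Finset.sum_range_succ, Finset.sum_range_succ, Finset.range_zero,
      Finset.sum_empty, jc_zero']
  simp only [add_comp, mul_comp, C_comp, pow_comp, sub_comp, one_comp, X_comp, zero_add,
    pow_zero, mul_one, zero_comp]
  rw [← c1v, ← c2v]
  simp only [C_add, C_mul, C_sub, C_neg, C_1, map_ofNat]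
  ring

noncomputable def P2hi (α β : ℝ) (n : ℕ) : ℝ := aT α β n * aT α β (n+1)
noncomputable def P2mid (α β : ℝ) (n : ℕ) : ℝ :=
  aT α β n * cT α β (n+1) + cT α β n * aT α β (n-1)
noncomputable def P2lo (α β : ℝ) (n : ℕ) : ℝ := cT α β n * cT α β (n-1)

lemma X2_rec {α β : ℝ} (hα : -1 < α) (hβ : -1 < β) (n : ℕ) (hn : 2 ≤ n) :
    Polynomial.X^2 * genCheb α β n
      = Polynomial.C (P2hi α β n) * genCheb α β (n+2)
        + Polynomial.C (P2mid α β n) * genCheb α β n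
        + Polynomial.C (P2lo α β n) * genCheb α β (n-2) := by
  have r0 := cheb_rec hα hβ n (by omega)
  have r1 := cheb_rec hα hβ (n+1) (by omega)
  have r2 := cheb_rec hα hβ (n-1) (by omega)
  rw [show n-1+1 = n by omega, show n-1-1 = n-2 by omega] at r2
  rw [show n+1+1 = n+2 from rfl, show n+1-1 = n from rfl] at r1
  have e1 : Polynomial.X^2 * genCheb α β n = Polynomial.X * (Polynomial.X * genCheb α β n) := by
    ring
  rw [e1, r0, mul_add, mul_left_comm, r1, mul_left_comm, r2]
  rw [P2hi, P2mid, P2lo]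
  simp only [C_add, C_mul]
  ring_nf

noncomputable def W0v (α β : ℝ) (n : ℕ) : ℝ :=
  P2hi α β n * P2lo α β (n+2) + P2mid α β n * P2mid α β n + P2lo α β n * P2hi α β (n-2)

lemma X4_rec {α β : ℝ} (hα : -1 < α) (hβ : -1 < β) (n : ℕ) (hn : 4 ≤ n) :
    Polynomial.X^4 * genCheb α β n
      = Polynomial.C (P2hi α β n * P2hi α β (n+2)) * genCheb α β (n+4)
        + Polynomial.C (P2hi α β n * P2mid α β (n+2) + P2mid α β n * P2hi α β n)
            * genCheb α β (n+2)
        + Polynomial.C (W0v α β n) * genCheb α β n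
        + Polynomial.C (P2mid α β n * P2lo α β n + P2lo α β n * P2mid α β (n-2))
            * genCheb α β (n-2)
        + Polynomial.C (P2lo α β n * P2lo α β (n-2)) * genCheb α β (n-4) := by
  have r0 := X2_rec hα hβ n (by omega)
  have r1 := X2_rec hα hβ (n+2) (by omega)
  have r2 := X2_rec hα hβ (n-2) (by omega)
  rw [show n+2+2 = n+4 by omega, show n+2-2 = n by omega] at r1
  rw [show n-2+2 = n by omega, show n-2-2 = n-4 by omega] at r2
  have e1 : Polynomial.X^4 * genCheb α β n
      = Polynomial.X^2 * (Polynomial.X^2 * genCheb α β n) := by ring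
  rw [e1, r0, mul_add, mul_add, mul_left_comm, r1, mul_left_comm, r0, mul_left_comm, r2, W0v]
  simp only [C_add, C_mul]
  ring_nf

section Gsec
variable {α β : ℝ} (hα : -1 < α) (hβ : -1 < β) (g : ℕ → ℕ → ℕ → ℝ)
variable (hg : ∀ m n : ℕ, genCheb α β m * genCheb α β n =
      ∑ k ∈ Finset.Icc (Nat.dist m n) (m + n), Polynomial.C (g m n k) * genCheb α β k)

/-- extended linearization coefficients -/
noncomputable def Gg (g : ℕ → ℕ → ℕ → ℝ) (m n k : ℕ) : ℝ :=
  if k ∈ Finset.Icc (Nat.dist m n) (m+n) then g m n k else 0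

lemma Gg_of_mem {m n k : ℕ} (h : k ∈ Finset.Icc (Nat.dist m n) (m+n)) :
    Gg g m n k = g m n k := if_pos h

lemma Gg_of_not_mem {m n k : ℕ} (h : k ∉ Finset.Icc (Nat.dist m n) (m+n)) :
    Gg g m n k = 0 := if_neg h

include hg in
lemma hg' (m n : ℕ) : genCheb α β m * genCheb α β n
    = ∑ k ∈ Finset.range (m+n+1), Polynomial.C (Gg g m n k) * genCheb α β k := by
  rw [hg m n]
  have h1 : ∑ k ∈ Finset.Icc (Nat.dist m n) (m+n), Polynomial.C (g m n k) * genCheb α β k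
      = ∑ k ∈ Finset.Icc (Nat.dist m n) (m+n), Polynomial.C (Gg g m n k) * genCheb α β k :=
    Finset.sum_congr rfl fun k hk => by rw [Gg_of_mem g hk]
  rw [h1]
  refine Finset.sum_subset (fun k hk => ?_) (fun k _ hk => ?_)
  · simp only [Finset.mem_Icc] at hk
    simp only [Finset.mem_range]
    omega
  · rw [Gg_of_not_mem g hk]
    simp

include hg in
lemma expand3 (m n D : ℕ) (hD : m + n + 1 ≤ D) :
    genCheb α β m * genCheb α β n
      = ∑ k ∈ Finset.range D, Polynomial.C (Gg g m n k) * genCheb α β k := by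
  rw [hg' g hg m n]
  refine Finset.sum_subset (Finset.range_subset_range.2 hD) (fun k _ hk => ?_)
  simp only [Finset.mem_range] at hk
  rw [Gg_of_not_mem g (by simp only [Finset.mem_Icc]; omega)]
  simp

include hα hβ hg in
lemma dual (N : ℕ) (hN : 4 ≤ N) :
    g 4 N N * g N N 0 = g N N 4 * g 4 4 0 := by
  have E1 : genCheb α β 4 * genCheb α β N * genCheb α β N
      = ∑ j ∈ Finset.range (2*N+5),
          Polynomial.C (∑ k ∈ Finset.range (N+5), Gg g 4 N k * Gg g k N j) * genCheb α β j := by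
    calc genCheb α β 4 * genCheb α β N * genCheb α β N
        = ∑ k ∈ Finset.range (N+5), (Polynomial.C (Gg g 4 N k) * genCheb α β k) * genCheb α β N := by
          rw [expand3 g hg 4 N (N+5) (by omega), Finset.sum_mul]
      _ = ∑ k ∈ Finset.range (N+5), ∑ j ∈ Finset.range (2*N+5),
            Polynomial.C (Gg g 4 N k * Gg g k N j) * genCheb α β j := by
          refine Finset.sum_congr rfl fun k hk => ?_
          simp only [Finset.mem_range] at hk
          rw [mul_assoc, expand3 g hg k N (2*N+5) (by omega), Finset.mul_sum]
          refine Finset.sum_congr rfl fun j _ => ?_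
          rw [C_mul]; ring
      _ = ∑ j ∈ Finset.range (2*N+5), ∑ k ∈ Finset.range (N+5),
            Polynomial.C (Gg g 4 N k * Gg g k N j) * genCheb α β j := Finset.sum_comm
      _ = _ := by
          refine Finset.sum_congr rfl fun j _ => ?_
          rw [← Finset.sum_mul]
          congr 1
          exact (map_sum Polynomial.C _ _).symm
  have E2 : genCheb α β 4 * genCheb α β N * genCheb α β N
      = ∑ j ∈ Finset.range (2*N+5),
          Polynomial.C (∑ k ∈ Finset.range (2*N+1), Gg g N N k * Gg g 4 k j) * genCheb α β j := by
    calc genCheb α β 4 * genCheb α β N * genCheb α β N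
        = ∑ k ∈ Finset.range (2*N+1), Polynomial.C (Gg g N N k) * (genCheb α β 4 * genCheb α β k) := by
          rw [mul_assoc, expand3 g hg N N (2*N+1) (by omega), Finset.mul_sum]
          refine Finset.sum_congr rfl fun k _ => ?_
          ring
      _ = ∑ k ∈ Finset.range (2*N+1), ∑ j ∈ Finset.range (2*N+5),
            Polynomial.C (Gg g N N k * Gg g 4 k j) * genCheb α β j := by
          refine Finset.sum_congr rfl fun k hk => ?_
          simp only [Finset.mem_range] at hk
          rw [expand3 g hg 4 k (2*N+5) (by omega), Finset.mul_sum]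
          refine Finset.sum_congr rfl fun j _ => ?_
          rw [C_mul]; ring
      _ = ∑ j ∈ Finset.range (2*N+5), ∑ k ∈ Finset.range (2*N+1),
            Polynomial.C (Gg g N N k * Gg g 4 k j) * genCheb α β j := Finset.sum_comm
      _ = _ := by
          refine Finset.sum_congr rfl fun j _ => ?_
          rw [← Finset.sum_mul]
          congr 1
          exact (map_sum Polynomial.C _ _).symm
  have key := ext_eq hα hβ (2*N+5) _ _ (E1.symm.trans E2) 0 (by omega)
  have L : ∑ k ∈ Finset.range (N+5), Gg g 4 N k * Gg g k N 0 = g 4 N N * g N N 0 := by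
    rw [Finset.sum_eq_single N]
    · rw [Gg_of_mem g (by simp only [Finset.mem_Icc, Nat.dist]; omega),
          Gg_of_mem g (by simp only [Finset.mem_Icc, Nat.dist]; omega)]
    · intro k _ hk
      rw [Gg_of_not_mem g (k := 0) (by simp only [Finset.mem_Icc, Nat.dist]; omega)]
      ring
    · intro hN'; exact absurd (Finset.mem_range.2 (by omega)) hN'
  have R : ∑ k ∈ Finset.range (2*N+1), Gg g N N k * Gg g 4 k 0 = g N N 4 * g 4 4 0 := by
    rw [Finset.sum_eq_single 4]
    · rw [Gg_of_mem g (by simp only [Finset.mem_Icc, Nat.dist]; omega),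
          Gg_of_mem g (by simp only [Finset.mem_Icc, Nat.dist]; omega)]
    · intro k _ hk
      rw [Gg_of_not_mem g (k := 0) (by simp only [Finset.mem_Icc, Nat.dist]; omega)]
      ring
    · intro hN'; exact absurd (Finset.mem_range.2 (by omega)) hN'
  rw [← L, ← R, key]

include hα hβ hg in
lemma g000 : g 0 0 0 = 1 := by
  have h := hg 0 0
  rw [genCheb_zero] at h
  simp only [Nat.dist_self, Finset.Icc_self, Finset.sum_singleton, genCheb_zero, mul_one] at h
  have := congrArg (fun p : Polynomial ℝ => p.coeff 0) h
  simpa using this.symm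

include hα hβ hg in
lemma g110 : g 1 1 0 = cT α β 1 := by
  have hrec := cheb_rec hα hβ 1 le_rfl
  have E1 : genCheb α β 1 * genCheb α β 1
      = ∑ j ∈ Finset.range 3, Polynomial.C (Gg g 1 1 j) * genCheb α β j :=
    expand3 g hg 1 1 3 (by omega)
  have E2 : genCheb α β 1 * genCheb α β 1
      = ∑ j ∈ Finset.range 3,
          Polynomial.C (if j = 2 then aT α β 1 else if j = 0 then cT α β 1 else 0) * genCheb α β j := by
    have h1 : genCheb α β 1 * genCheb α β 1 = Polynomial.X * genCheb α β 1 := by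
      rw [genCheb_one]
    rw [h1, hrec]
    rw [Finset.sum_range_succ, Finset.sum_range_succ, Finset.sum_range_succ, Finset.range_zero,
        Finset.sum_empty]
    norm_num
    ring
  have := ext_eq hα hβ 3 _ _ (E1.symm.trans E2) 0 (by omega)
  rw [Gg_of_mem g (m := 1) (n := 1) (k := 0) (by simp [Nat.dist])] at this
  simpa using this

include hα hβ hg in
lemma hrec (n : ℕ) (hn : 1 ≤ n) :
    aT α β n * g (n+1) (n+1) 0 = cT α β (n+1) * g n n 0 := by
  have r1 := cheb_rec hα hβ n hn
  have r2 := cheb_rec hα hβ (n+1) (by omega)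
  have E1 : Polynomial.X * genCheb α β n * genCheb α β (n+1)
      = ∑ j ∈ Finset.range (2*n+3),
          Polynomial.C (aT α β n * Gg g (n+1) (n+1) j + cT α β n * Gg g (n-1) (n+1) j)
            * genCheb α β j := by
    rw [r1, add_mul, mul_assoc, mul_assoc, expand3 g hg (n+1) (n+1) (2*n+3) (by omega),
        expand3 g hg (n-1) (n+1) (2*n+3) (by omega), Finset.mul_sum, Finset.mul_sum,
        ← Finset.sum_add_distrib]
    refine Finset.sum_congr rfl fun j _ => ?_
    rw [C_add, C_mul, C_mul]
    ring
  have E2 : Polynomial.X * genCheb α β n * genCheb α β (n+1)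
      = ∑ j ∈ Finset.range (2*n+3),
          Polynomial.C (aT α β (n+1) * Gg g (n+2) n j + cT α β (n+1) * Gg g n n j)
            * genCheb α β j := by
    have h0 : Polynomial.X * genCheb α β n * genCheb α β (n+1)
        = (Polynomial.X * genCheb α β (n+1)) * genCheb α β n := by ring
    rw [h0, r2, show n+1+1 = n+2 from rfl, show n+1-1 = n from rfl, add_mul, mul_assoc, mul_assoc,
        expand3 g hg (n+2) n (2*n+3) (by omega), expand3 g hg n n (2*n+3) (by omega),
        Finset.mul_sum, Finset.mul_sum, ← Finset.sum_add_distrib]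
    refine Finset.sum_congr rfl fun j _ => ?_
    rw [C_add, C_mul, C_mul]
    ring
  have key := ext_eq hα hβ (2*n+3) _ _ (E1.symm.trans E2) 0 (by omega)
  rw [Gg_of_not_mem g (m := n-1) (n := n+1) (k := 0) (by
        simp only [Finset.mem_Icc, Nat.dist]; omega),
      Gg_of_not_mem g (m := n+2) (n := n) (k := 0) (by
        simp only [Finset.mem_Icc, Nat.dist]; omega),
      Gg_of_mem g (m := n+1) (n := n+1) (k := 0) (by simp [Nat.dist]),
      Gg_of_mem g (m := n) (n := n) (k := 0) (by simp [Nat.dist])] at key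
  linarith [key]


include hα hβ hg in
lemma h_pos : ∀ n : ℕ, 0 < g n n 0 := by
  have haT : ∀ n : ℕ, 1 ≤ n → 0 < aT α β n := by
    intro n hn
    rcases Nat.even_or_odd n with ⟨k, hk⟩ | ⟨k, hk⟩
    · have hk1 : 1 ≤ k := by omega
      have hk1' : (1:ℝ) ≤ (k:ℝ) := by exact_mod_cast hk1
      rw [show n = 2*k by omega, aT_even]
      apply div_pos <;> linarith
    · have hk0 : (0:ℝ) ≤ (k:ℝ) := Nat.cast_nonneg k
      rw [show n = 2*k+1 by omega, aT_odd]
      apply div_pos <;> linarith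
  have hcT : ∀ n : ℕ, 1 ≤ n → 0 < cT α β n := by
    intro n hn
    rcases Nat.even_or_odd n with ⟨k, hk⟩ | ⟨k, hk⟩
    · have hk1 : 1 ≤ k := by omega
      have hk1' : (1:ℝ) ≤ (k:ℝ) := by exact_mod_cast hk1
      rw [show n = 2*k by omega, cT_even]
      apply div_pos <;> linarith
    · have hk0 : (0:ℝ) ≤ (k:ℝ) := Nat.cast_nonneg k
      rw [show n = 2*k+1 by omega, cT_odd]
      apply div_pos <;> linarith
  intro n
  induction n with
  | zero => rw [g000 hα hβ g hg]; norm_num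
  | succ m ih =>
    rcases Nat.eq_zero_or_pos m with rfl | hm
    · rw [g110 hα hβ g hg]
      exact hcT 1 le_rfl
    · have hr := hrec hα hβ g hg m hm
      have h1 := haT m hm
      have h2 := hcT (m+1) (by omega)
      have h3 : 0 < cT α β (m+1) * g m m 0 := mul_pos h2 ih
      rw [← hr] at h3
      by_contra hcon
      push_neg at hcon
      nlinarith [h3, h1]

include hα hβ in
lemma single (D t : ℕ) (V : ℝ) (ht : t < D) :
    Polynomial.C V * genCheb α β t
      = ∑ j ∈ Finset.range D, Polynomial.C (if j = t then V else 0) * genCheb α β j := by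
  rw [Finset.sum_eq_single t]
  · rw [if_pos rfl]
  · intro j _ hj
    rw [if_neg hj]
    simp
  · intro h
    exact absurd (Finset.mem_range.2 ht) h

include hα hβ hg in
lemma g4NN (N : ℕ) (hN : 4 ≤ N) :
    g 4 N N = 4 * c2v α β * W0v α β N
      + (-2 * c1v α β - 8 * c2v α β) * P2mid α β N + (1 + 2 * c1v α β + 4 * c2v α β) := by
  set A := 4 * c2v α β with hA
  set B := -2 * c1v α β - 8 * c2v α β with hB
  set Cc := 1 + 2 * c1v α β + 4 * c2v α β with hCc
  set V4 := A * (P2hi α β N * P2hi α β (N+2)) with hV4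
  set V2 := A * (P2hi α β N * P2mid α β (N+2) + P2mid α β N * P2hi α β N) + B * P2hi α β N with hV2
  set V0 := A * W0v α β N + B * P2mid α β N + Cc with hV0
  set Vm2 := A * (P2mid α β N * P2lo α β N + P2lo α β N * P2mid α β (N-2)) + B * P2lo α β N with hVm2
  set Vm4 := A * (P2lo α β N * P2lo α β (N-2)) with hVm4
  have E2 : genCheb α β 4 * genCheb α β N
      = Polynomial.C V4 * genCheb α β (N+4) + Polynomial.C V2 * genCheb α β (N+2)
        + Polynomial.C V0 * genCheb α β N + Polynomial.C Vm2 * genCheb α β (N-2)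
        + Polynomial.C Vm4 * genCheb α β (N-4) := by
    rw [T4_eq α β, add_mul, add_mul, mul_assoc, mul_assoc, X4_rec hα hβ N hN,
        X2_rec hα hβ N (by omega), hV4, hV2, hV0, hVm2, hVm4]
    simp only [hA, hB, hCc, C_add, C_mul, C_sub, C_neg, C_1, map_ofNat]
    ring
  have E2' : genCheb α β 4 * genCheb α β N
      = ∑ j ∈ Finset.range (N+5),
          Polynomial.C ((if j = N+4 then V4 else 0) + (if j = N+2 then V2 else 0)
            + (if j = N then V0 else 0) + (if j = N-2 then Vm2 else 0)
            + (if j = N-4 then Vm4 else 0)) * genCheb α β j := by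
    rw [E2, single hα hβ (N+5) (N+4) V4 (by omega), single hα hβ (N+5) (N+2) V2 (by omega),
        single hα hβ (N+5) N V0 (by omega), single hα hβ (N+5) (N-2) Vm2 (by omega),
        single hα hβ (N+5) (N-4) Vm4 (by omega),
        ← Finset.sum_add_distrib, ← Finset.sum_add_distrib, ← Finset.sum_add_distrib,
        ← Finset.sum_add_distrib]
    refine Finset.sum_congr rfl fun j _ => ?_
    simp only [C_add]
    ring
  have E1 : genCheb α β 4 * genCheb α β N
      = ∑ j ∈ Finset.range (N+5), Polynomial.C (Gg g 4 N j) * genCheb α β j :=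
    expand3 g hg 4 N (N+5) (by omega)
  have key := ext_eq hα hβ (N+5) _ _ (E1.symm.trans E2') N (by omega)
  rw [Gg_of_mem g (by simp only [Finset.mem_Icc, Nat.dist]; omega)] at key
  rw [key, if_neg (by omega), if_neg (by omega), if_pos rfl, if_neg (by omega),
      if_neg (by omega), hV0]
  ring
end Gsec

open Filter in
lemma tend_half (c d : ℝ) :
    Filter.Tendsto (fun m : ℕ => ((m:ℝ)+c)/(2*(m:ℝ)+d)) Filter.atTop (nhds (1/2)) := by
  have h1 : Filter.Tendsto (fun m : ℕ => 1 + c*(1/(m:ℝ))) Filter.atTop (nhds (1 + c*0)) :=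
    (tendsto_one_div_atTop_nhds_zero_nat.const_mul c).const_add 1
  have h2 : Filter.Tendsto (fun m : ℕ => 2 + d*(1/(m:ℝ))) Filter.atTop (nhds (2 + d*0)) :=
    (tendsto_one_div_atTop_nhds_zero_nat.const_mul d).const_add 2
  have h0 := h1.div h2 (by norm_num)
  have e : (1 + c*0)/(2 + d*0) = 1/2 := by norm_num
  rw [e] at h0
  refine h0.congr' ?_
  filter_upwards [Filter.eventually_ge_atTop (max 1 (Nat.ceil (|d|+1)))] with m hm
  have hm1 : 1 ≤ m := le_trans (le_max_left _ _) hm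
  have hmr : (0:ℝ) < (m:ℝ) := by exact_mod_cast hm1
  have hden : (0:ℝ) < 2*(m:ℝ) + d := by
    have h3 : ((Nat.ceil (|d|+1) : ℕ):ℝ) ≤ (m:ℝ) := by
      exact_mod_cast le_trans (le_max_right _ _) hm
    have h4 : |d| + 1 ≤ (m:ℝ) := le_trans (Nat.le_ceil _) h3
    nlinarith [neg_abs_le d]
  simp only [Pi.div_apply]
  field_simp

lemma poch_one (c : ℝ) : poch c 1 = c := by
  have := poch_succ c 0
  simpa [poch_zero] using this

lemma poch_two (c : ℝ) : poch c 2 = c*(c+1) := by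
  rw [show (2:ℕ) = 1+1 from rfl, poch_succ, poch_one]
  push_cast
  ring

lemma c1v_eq {α : ℝ} (β : ℝ) (hα : -1 < α) : c1v α β = -(α+β+3)/(α+1) := by
  have h1 : (α:ℝ)+1 ≠ 0 := by linarith
  rw [c1v, jc, poch_one, poch_one, poch_one]
  push_cast [Nat.factorial]
  field_simp
  ring

lemma c2v_eq {α : ℝ} (β : ℝ) (hα : -1 < α) :
    c2v α β = (α+β+3)*(α+β+4)/(4*(α+1)*(α+2)) := by
  have h1 : (α:ℝ)+1 ≠ 0 := by linarith
  have h2 : (α:ℝ)+2 ≠ 0 := by linarith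
  rw [c2v, jc, poch_two, poch_two, poch_two, show α+1+1 = α+2 by ring]
  push_cast [Nat.factorial]
  field_simp
  ring

open Filter in
lemma main_neg {α β : ℝ} (hα : -1 < α) (hβ : -1 < β)
    (h : (α+β+1)^2 + 2*(α-β)^2 + 3*(α+β+1) < 0) :
    ∃ M : ℕ, ∀ m : ℕ, M ≤ m →
      4 * c2v α β * W0v α β (2*m+1) + (-2 * c1v α β - 8 * c2v α β) * P2mid α β (2*m+1)
        + (1 + 2 * c1v α β + 4 * c2v α β) < 0 := by
  have hA1 := tend_half (α+1) (α+β+2)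
  have hA2 := tend_half (α+β+2) (α+β+3)
  have hA3 := tend_half (α+β+1) (α+β+1)
  have hA4 := tend_half α (α+β)
  have hC1 := tend_half (β+1) (α+β+2)
  have hC2 := tend_half 1 (α+β+3)
  have hC3 := tend_half (β+2) (α+β+4)
  have hC4 := tend_half 0 (α+β+1)
  have eP : (fun m : ℕ => P2mid α β (2*m+1)) =ᶠ[atTop] fun m : ℕ => ((m:ℝ)+(α+1))/(2*(m:ℝ)+(α+β+2)) * (((m:ℝ)+1)/(2*(m:ℝ)+(α+β+3)))
        + ((m:ℝ)+(β+1))/(2*(m:ℝ)+(α+β+2)) * (((m:ℝ)+(α+β+1))/(2*(m:ℝ)+(α+β+1))) := by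
    filter_upwards with m
    rw [P2mid, show 2*m+1+1 = 2*(m+1) by omega, show 2*m+1-1 = 2*m by omega,
        aT_odd, cT_even, cT_odd, aT_even]
    push_cast
    ring
  have eW : (fun m : ℕ => W0v α β (2*m+1)) =ᶠ[atTop] fun m : ℕ => (((m:ℝ)+(α+1))/(2*(m:ℝ)+(α+β+2)) * (((m:ℝ)+(α+β+2))/(2*(m:ℝ)+(α+β+3))))
          * (((m:ℝ)+(β+2))/(2*(m:ℝ)+(α+β+4)) * (((m:ℝ)+1)/(2*(m:ℝ)+(α+β+3))))
        + (((m:ℝ)+(α+1))/(2*(m:ℝ)+(α+β+2)) * (((m:ℝ)+1)/(2*(m:ℝ)+(α+β+3)))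
            + ((m:ℝ)+(β+1))/(2*(m:ℝ)+(α+β+2)) * (((m:ℝ)+(α+β+1))/(2*(m:ℝ)+(α+β+1))))
          * (((m:ℝ)+(α+1))/(2*(m:ℝ)+(α+β+2)) * (((m:ℝ)+1)/(2*(m:ℝ)+(α+β+3)))
            + ((m:ℝ)+(β+1))/(2*(m:ℝ)+(α+β+2)) * (((m:ℝ)+(α+β+1))/(2*(m:ℝ)+(α+β+1))))
        + (((m:ℝ)+(β+1))/(2*(m:ℝ)+(α+β+2)) * (((m:ℝ)+0)/(2*(m:ℝ)+(α+β+1))))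
          * (((m:ℝ)+α)/(2*(m:ℝ)+(α+β)) * (((m:ℝ)+(α+β+1))/(2*(m:ℝ)+(α+β+1)))) := by
    filter_upwards [eventually_ge_atTop 1] with m hm
    rw [W0v, show 2*m+1+2 = 2*(m+1)+1 by omega, show 2*m+1-2 = 2*(m-1)+1 by omega,
        P2hi, P2hi, P2mid, P2lo, P2lo,
        show 2*m+1+1 = 2*(m+1) by omega, show 2*(m+1)+1-1 = 2*(m+1) by omega,
        show 2*m+1-1 = 2*m by omega, show 2*(m-1)+1+1 = 2*m by omega,
        aT_odd α β m, aT_even α β (m+1), cT_odd α β (m+1), cT_even α β (m+1),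
        cT_odd α β m, cT_even α β m, aT_even α β m, aT_odd α β (m-1)]
    push_cast [Nat.cast_sub hm]
    ring
  have tP : Tendsto (fun m : ℕ => P2mid α β (2*m+1)) atTop
      (nhds (1/2*(1/2) + 1/2*(1/2))) :=
    ((hA1.mul hC2).add (hC1.mul hA3)).congr' eP.symm
  have tW : Tendsto (fun m : ℕ => W0v α β (2*m+1)) atTop
      (nhds ((1/2*(1/2))*(1/2*(1/2)) + (1/2*(1/2) + 1/2*(1/2))*(1/2*(1/2) + 1/2*(1/2))
        + (1/2*(1/2))*(1/2*(1/2)))) :=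
    ((((hA1.mul hA2).mul (hC3.mul hC2)).add
      (((hA1.mul hC2).add (hC1.mul hA3)).mul ((hA1.mul hC2).add (hC1.mul hA3)))).add
      ((hC1.mul hC4).mul (hA4.mul hA3))).congr' eW.symm
  have tF : Tendsto (fun m : ℕ =>
      4 * c2v α β * W0v α β (2*m+1) + (-2 * c1v α β - 8 * c2v α β) * P2mid α β (2*m+1)
        + (1 + 2 * c1v α β + 4 * c2v α β)) atTop
      (nhds ((4 * c2v α β) * ((1/2*(1/2))*(1/2*(1/2)) + (1/2*(1/2) + 1/2*(1/2))*(1/2*(1/2) + 1/2*(1/2))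
        + (1/2*(1/2))*(1/2*(1/2))) + (-2 * c1v α β - 8 * c2v α β) * (1/2*(1/2) + 1/2*(1/2))
        + (1 + 2 * c1v α β + 4 * c2v α β))) :=
    ((tW.const_mul _).add (tP.const_mul _)).add_const _
  have hden : (0:ℝ) < 8*(α+1)*(α+2) := by nlinarith
  have hLval : (4 * c2v α β) * ((1/2*(1/2))*(1/2*(1/2)) + (1/2*(1/2) + 1/2*(1/2))*(1/2*(1/2) + 1/2*(1/2))
        + (1/2*(1/2))*(1/2*(1/2))) + (-2 * c1v α β - 8 * c2v α β) * (1/2*(1/2) + 1/2*(1/2))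
        + (1 + 2 * c1v α β + 4 * c2v α β)
      = ((α+β+1)^2 + 2*(α-β)^2 + 3*(α+β+1))/(8*(α+1)*(α+2)) := by
    have h1 : α+1 ≠ 0 := by linarith
    have h2 : α+2 ≠ 0 := by linarith
    rw [c1v_eq β hα, c2v_eq β hα]
    field_simp
    ring
  have hL : (4 * c2v α β) * ((1/2*(1/2))*(1/2*(1/2)) + (1/2*(1/2) + 1/2*(1/2))*(1/2*(1/2) + 1/2*(1/2))
        + (1/2*(1/2))*(1/2*(1/2))) + (-2 * c1v α β - 8 * c2v α β) * (1/2*(1/2) + 1/2*(1/2))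
        + (1 + 2 * c1v α β + 4 * c2v α β) < 0 := by
    rw [hLval]
    exact div_neg_of_neg_of_pos h hden
  have hev := tF.eventually_lt_const hL
  rw [eventually_atTop] at hev
  exact hev

/-- If `a² + 2b² + 3a < 0`, then `g_T(2m+1, 2m+1; 4) < 0` for all sufficiently large `m`. -/
theorem stmt16 (α β : ℝ) (hα : -1 < α) (hβ : -1 < β)
    (h : (α + β + 1) ^ 2 + 2 * (α - β) ^ 2 + 3 * (α + β + 1) < 0)
    (g : ℕ → ℕ → ℕ → ℝ)
    (hg : ∀ m n : ℕ, genCheb α β m * genCheb α β n =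
      ∑ k ∈ Finset.Icc (Nat.dist m n) (m + n), Polynomial.C (g m n k) * genCheb α β k) :
    ∃ M : ℕ, ∀ m : ℕ, M ≤ m → g (2 * m + 1) (2 * m + 1) 4 < 0 := by
  obtain ⟨M, hM⟩ := main_neg hα hβ h
  refine ⟨max M 2, fun m hm => ?_⟩
  have hm2 : 2 ≤ m := le_trans (le_max_right _ _) hm
  have hmM : M ≤ m := le_trans (le_max_left _ _) hm
  have hN4 : 4 ≤ 2*m+1 := by omega
  have hgf := g4NN hα hβ g hg (2*m+1) hN4
  have hneg : g 4 (2*m+1) (2*m+1) < 0 := by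
    rw [hgf]
    exact hM m hmM
  have hd := dual hα hβ g hg (2*m+1) hN4
  have h1 := h_pos hα hβ g hg (2*m+1)
  have h2 := h_pos hα hβ g hg 4
  by_contra hcon
  push_neg at hcon
  nlinarith [mul_neg_of_neg_of_pos hneg h1, mul_nonneg hcon h2.le]
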